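/- Let a < b be coprime positive integers. If θ1, θ2 ∈ {0, 1/2} satisfy μ_{a,b}(θ1,θ2) = 0, then for every positive integer n > b and every real θ3, μ_{a,b,n}(θ1,θ2,θ3) ≤ (3b−a)/(2n). -/

import Mathlib

/-- Distance from a real number to the nearest integer. -/
noncomputable def dni (u : ℝ) : ℝ := |u - round u|

lemma dni_nonneg (u : ℝ) : 0 ≤ dni u := abs_nonneg _

lemma dni_le_int (u : ℝ) (m : ℤ) : dni u ≤ |u - m| := round_le u m

lemma dni_le_abs (u : ℝ) : dni u ≤ |u| := by
  simpa using dni_le_int u 0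

lemma dni_add_int (u : ℝ) (m : ℤ) : dni (u + m) = dni u := by
  unfold dni
  rw [round_add_intCast]
  push_cast
  ring_nf

lemma dni_zero : dni 0 = 0 := by unfold dni; simp

lemma dni_int (m : ℤ) : dni (m : ℝ) = 0 := by
  have := dni_add_int 0 m
  simpa [dni_zero] using this

lemma dni_eq_zero {u : ℝ} (h : dni u = 0) : ∃ m : ℤ, u = m := by
  exact ⟨round u, by have := abs_eq_zero.mp h; linarith⟩

lemma dni_lipschitz : LipschitzWith 1 dni := by
  apply LipschitzWith.of_dist_le_mul
  intro u v
  rw [Real.dist_eq, Real.dist_eq, NNReal.coe_one, one_mul, abs_sub_le_iff]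
  constructor
  · have h1 : dni u ≤ |u - round v| := dni_le_int u (round v)
    have h2 : |u - round v| ≤ |u - v| + |v - round v| := by
      have := abs_sub_abs_le_abs_sub (u - (round v:ℝ)) (v - (round v:ℝ))
      calc |u - round v| = |(u - v) + (v - round v)| := by ring_nf
        _ ≤ |u - v| + |v - round v| := abs_add_le _ _
    unfold dni at h1 ⊢; linarith [h1, h2]
  · have h1 : dni v ≤ |v - round u| := dni_le_int v (round u)
    have h2 : |v - round u| ≤ |v - u| + |u - round u| := by
      calc |v - round u| = |(v - u) + (u - round u)| := by ring_nf
        _ ≤ |v - u| + |u - round u| := abs_add_le _ _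
    unfold dni at h1 ⊢
    rw [abs_sub_comm u v]
    linarith [h1, h2]

lemma dni_continuous : Continuous dni := dni_lipschitz.continuous

/-- Approximation cost of `(t1, t2)` relative to the two-element set `{a, b}`. -/
noncomputable def mu2 (a b : ℕ) (t1 t2 : ℝ) : ℝ :=
  ⨅ x : ℝ, max (dni (t1 - x * a)) (dni (t2 - x * b))

/-- Approximation cost of `(t1, t2, t3)` relative to the set `{a, b, n}`. -/
noncomputable def mu3 (a b n : ℕ) (t1 t2 t3 : ℝ) : ℝ :=
  ⨅ x : ℝ, max (dni (t1 - x * a)) (max (dni (t2 - x * b)) (dni (t3 - x * n)))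

/-- Angular Kronecker constant of `{a, b, n}`. -/
noncomputable def alpha3 (a b n : ℕ) : ℝ :=
  sSup {v : ℝ | ∃ t1 t2 t3 : ℝ, v = mu3 a b n t1 t2 t3}

/-- Binary Kronecker constant of `{a, b, n}`. -/
noncomputable def beta3 (a b n : ℕ) : ℝ :=
  sSup {v : ℝ | ∃ t1 t2 t3 : ℝ, t1 ∈ ({0, 1/2} : Set ℝ) ∧ t2 ∈ ({0, 1/2} : Set ℝ) ∧
    t3 ∈ ({0, 1/2} : Set ℝ) ∧ v = mu3 a b n t1 t2 t3}

theorem stmt_12 (a b : ℕ) (ha : 0 < a) (hab : a < b) (hcop : Nat.Coprime a b)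
    (θ1 θ2 : ℝ) (hθ1 : θ1 ∈ ({0, 1/2} : Set ℝ)) (hθ2 : θ2 ∈ ({0, 1/2} : Set ℝ))
    (hmu : mu2 a b θ1 θ2 = 0) :
    ∀ n : ℕ, b < n → ∀ θ3 : ℝ,
      mu3 a b n θ1 θ2 θ3 ≤ (3 * (b : ℝ) - a) / (2 * n) := by
  set f : ℝ → ℝ := fun x => max (dni (θ1 - x * a)) (dni (θ2 - x * b)) with hf
  have hfc : Continuous f := by
    apply Continuous.max
    · exact dni_continuous.comp (by continuity)
    · exact dni_continuous.comp (by continuity)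
  have hper : Function.Periodic f 1 := by
    intro x
    have h1 : θ1 - (x + 1) * a = (θ1 - x * a) + (Int.cast (-(a:ℤ)) : ℝ) := by push_cast; ring
    have h2 : θ2 - (x + 1) * b = (θ2 - x * b) + (Int.cast (-(b:ℤ)) : ℝ) := by push_cast; ring
    simp only [hf, h1, h2, dni_add_int]
  obtain ⟨x0, hx0mem, hx0min⟩ :=
    (isCompact_Icc : IsCompact (Set.Icc (0:ℝ) 1)).exists_isMinOn
      (Set.nonempty_Icc.mpr zero_le_one) hfc.continuousOn
  have hmin : ∀ x : ℝ, f x0 ≤ f x := by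
    intro x
    have hfr : f (Int.fract x) = f x := by
      rw [Int.fract]
      have := hper.sub_int_mul_eq (x := x) ⌊x⌋
      simpa using this
    rw [← hfr]
    exact hx0min ⟨Int.fract_nonneg x, (Int.fract_lt_one x).le⟩
  have hfx0 : f x0 = 0 := by
    have hle : f x0 ≤ mu2 a b θ1 θ2 := le_ciInf hmin
    have hge : 0 ≤ f x0 := le_trans (dni_nonneg _) (le_max_left _ _)
    rw [hmu] at hle
    linarith
  have h1 : dni (θ1 - x0 * a) = 0 :=
    le_antisymm (le_trans (le_max_left _ _) hfx0.le) (dni_nonneg _)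
  have h2 : dni (θ2 - x0 * b) = 0 :=
    le_antisymm (le_trans (le_max_right _ _) hfx0.le) (dni_nonneg _)
  obtain ⟨m1, hm1⟩ := dni_eq_zero h1
  obtain ⟨m2, hm2⟩ := dni_eq_zero h2
  intro n hn θ3
  have hn0 : (0:ℝ) < n := by exact_mod_cast (by omega : 0 < n)
  set u3 : ℝ := θ3 - x0 * n with hu3
  set s : ℝ := (u3 - round u3) / n with hs
  have hsabs : |s| ≤ 1 / (2 * n) := by
    rw [hs, abs_div, abs_of_pos hn0]
    rw [div_le_div_iff₀ hn0 (by linarith)]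
    have := abs_sub_round u3
    nlinarith
  have hbdd : BddBelow (Set.range fun x : ℝ =>
      max (dni (θ1 - x * a)) (max (dni (θ2 - x * b)) (dni (θ3 - x * n)))) := by
    refine ⟨0, ?_⟩
    rintro v ⟨x, rfl⟩
    exact le_trans (dni_nonneg _) (le_max_left _ _)
  have key : mu3 a b n θ1 θ2 θ3 ≤
      max (dni (θ1 - (x0 + s) * a)) (max (dni (θ2 - (x0 + s) * b)) (dni (θ3 - (x0 + s) * n))) :=
    ciInf_le hbdd (x0 + s)
  have e1 : θ1 - (x0 + s) * a = (- (s * a)) + m1 := by rw [← hm1]; ring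
  have e2 : θ2 - (x0 + s) * b = (- (s * b)) + m2 := by rw [← hm2]; ring
  have e3 : θ3 - (x0 + s) * n = (round u3 : ℝ) := by
    rw [hs]
    field_simp
    ring
  have d1 : dni (θ1 - (x0 + s) * a) ≤ (a : ℝ) / (2 * n) := by
    rw [e1, dni_add_int]
    refine le_trans (dni_le_abs _) ?_
    rw [abs_neg, abs_mul, abs_of_nonneg (by positivity : (0:ℝ) ≤ (a:ℝ))]
    calc |s| * a ≤ (1 / (2 * n)) * a := by
          exact mul_le_mul_of_nonneg_right hsabs (by positivity)
      _ = (a : ℝ) / (2 * n) := by ring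
  have d2 : dni (θ2 - (x0 + s) * b) ≤ (b : ℝ) / (2 * n) := by
    rw [e2, dni_add_int]
    refine le_trans (dni_le_abs _) ?_
    rw [abs_neg, abs_mul, abs_of_nonneg (by positivity : (0:ℝ) ≤ (b:ℝ))]
    calc |s| * b ≤ (1 / (2 * n)) * b := by
          exact mul_le_mul_of_nonneg_right hsabs (by positivity)
      _ = (b : ℝ) / (2 * n) := by ring
  have d3 : dni (θ3 - (x0 + s) * n) = 0 := by rw [e3]; exact dni_int _
  have hab' : (a : ℝ) ≤ b := by exact_mod_cast hab.le
  have hbound : (b : ℝ) / (2 * n) ≤ (3 * (b : ℝ) - a) / (2 * n) := by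
    apply div_le_div_of_nonneg_right ?_ (by positivity)
    · linarith
  calc mu3 a b n θ1 θ2 θ3 ≤ _ := key
    _ ≤ (b : ℝ) / (2 * n) := by
        apply max_le
        · exact le_trans d1 (by apply div_le_div_of_nonneg_right hab' (by linarith))
        · exact max_le d2 (by rw [d3]; positivity)
    _ ≤ (3 * (b : ℝ) - a) / (2 * n) := hbound
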